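/- arXiv:2205.05000 — 2 statements merged into one kernel-verified Lean document; each statement's English description precedes it below -/
import Mathlib

section
/- Define (G₂ p)(X, S) = ∑_{i,j=1}^{n_s} ∑_{α=1}^{n_a} f_{ij}^{(α)}(X, S + i e_α − j e_α) p(X, S + i e_α − j e_α) with the second-order rate functions f_{ij}^{(α)}(X, S) = δ_i(s_α) ∑_{β ≠ α} δ_j(s_β) c_{ij} d_r(x_α, x_β), where S + i e_α − j e_α denotes coordinatewise integer arithmetic on the status vector and functions of (X, S) are extended by 0 when the status vector leaves S^{n_a}. Then for all M, N ∈ M_{n_a}: ⟨Φ_M, G₂ Φ_N⟩ = ∑_{l=1}^{m} c_{ij} b_{kl} N_i^{(k)} N_j^{(l)} ⟨Φ_N, Φ_N⟩ if M = N + E_j^{(k)} − E_i^{(k)} for some statuses i ≠ j and subset index k, and ⟨Φ_M, G₂ Φ_N⟩ = 0 otherwise. -/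
open MeasureTheory Finset Function

namespace ABMFormal

abbrev E (d : ℕ) : Type := EuclideanSpace ℝ (Fin d)
abbrev FS (d n_s n_a : ℕ) : Type := (Fin n_a → E d) → (Fin n_a → Fin n_s) → ℝ

noncomputable def occ {d m n_s n_a : ℕ} (A : Fin m → Set (E d)) (X : Fin n_a → E d)
    (S : Fin n_a → Fin n_s) (i : Fin n_s) (k : Fin m) : ℕ :=
  Set.ncard {α : Fin n_a | X α ∈ A k ∧ S α = i}

noncomputable def Phi {d m n_s n_a : ℕ} (A : Fin m → Set (E d)) (N : Fin n_s → Fin m → ℤ)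
    (X : Fin n_a → E d) (S : Fin n_a → Fin n_s) : ℝ :=
  if ∀ i k, ((occ A X S i k : ℕ) : ℤ) = N i k then 1 else 0

noncomputable def Mset (n_s m n_a : ℕ) : Finset (Fin n_s → Fin m → ℤ) :=
  ((Finset.univ : Finset (Fin n_s → Fin m → Fin (n_a + 1))).image
      fun f i k => ((f i k : ℕ) : ℤ)).filter
    fun N => (∑ i, ∑ k, N i k) = (n_a : ℤ)

def posSet {d : ℕ} (Xdom : Set (E d)) (n_a : ℕ) : Set (Fin n_a → E d) :=
  Set.univ.pi fun _ => Xdom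

noncomputable def ip {d n_s n_a : ℕ} (Xdom : Set (E d)) (f g : FS d n_s n_a) : ℝ :=
  (((volume Xdom).toReal * (n_s : ℝ)) ^ n_a)⁻¹ *
    ∑ S : Fin n_a → Fin n_s, ∫ X in posSet Xdom n_a, f X S * g X S

def one (d n_s n_a : ℕ) : FS d n_s n_a := fun _ _ => 1

def Emat {n_s m : ℕ} (i : Fin n_s) (k : Fin m) : Fin n_s → Fin m → ℤ :=
  fun i' k' => if i' = i ∧ k' = k then 1 else 0

def deltaS {n_s : ℕ} (i s : Fin n_s) : ℝ := if s = i then 1 else 0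

noncomputable def deltaA {d : ℕ} (A : Set (E d)) (x : E d) : ℝ :=
  A.indicator (fun _ => (1 : ℝ)) x

noncomputable def dr {d : ℕ} (r : ℝ) (x y : E d) : ℝ := if dist x y ≤ r then 1 else 0

/-- Transition rates `λ_i^{(kl)} = (∫_{A_l} ∫_{A_k} ℓ_i(x,y) dy dx) / μ(A_k)`. -/
noncomputable def lam {d m n_s : ℕ} (A : Fin m → Set (E d)) (K : Fin n_s → E d → E d → ℝ)
    (i : Fin n_s) (k l : Fin m) : ℝ :=
  (∫ x in A l, ∫ y in A k, K i x y) / (volume (A k)).toReal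

/-- The movement generator `(L p)(X, S) = ∑_α ∫_X ℓ_{s_α}(x_α, y) p(X^{α→y}, S) dy`. -/
noncomputable def Lop {d n_s n_a : ℕ} (Xdom : Set (E d)) (K : Fin n_s → E d → E d → ℝ)
    (p : FS d n_s n_a) : FS d n_s n_a :=
  fun X S => ∑ α, ∫ y in Xdom, K (S α) (X α) y * p (Function.update X α y) S

/-- `γ_{ij}^{(k)} = (∫_{A_k} γ_{ij}(x) dx) / μ(A_k)`. -/
noncomputable def gammaK {d m n_s : ℕ} (A : Fin m → Set (E d)) (γ : Fin n_s → Fin n_s → E d → ℝ)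
    (i j : Fin n_s) (k : Fin m) : ℝ :=
  (∫ x in A k, γ i j x) / (volume (A k)).toReal

/-- First-order adoption rate function `f_{ij}^{(α)}(X,S) = δ_i(s_α) γ_{ij}(x_α)`. -/
noncomputable def fFirst {d n_s n_a : ℕ} (γ : Fin n_s → Fin n_s → E d → ℝ) (i j : Fin n_s)
    (α : Fin n_a) (X : Fin n_a → E d) (S : Fin n_a → Fin n_s) : ℝ :=
  deltaS i (S α) * γ i j (X α)

/-- Outflow part `G₁ p = (∑_{i,j,α} f_{ij}^{(α)}) p` of the first-order adoption generator. -/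
noncomputable def G1First {d n_s n_a : ℕ} (γ : Fin n_s → Fin n_s → E d → ℝ)
    (p : FS d n_s n_a) : FS d n_s n_a :=
  fun X S => (∑ i, ∑ j, ∑ α, fFirst γ i j α X S) * p X S

/-- Inflow part `G₂ p (X,S) = ∑_{i,j,α} f_{ij}^{(α)}(X, S + i e_α − j e_α) p(X, S + i e_α − j e_α)`
of the first-order adoption generator.  Since in coordinatewise integer arithmetic
`δ_i(s_α + i − j) = δ_j(s_α)`, and then `S + i e_α − j e_α = Function.update S α i` lies in
`S^{n_a}`, while all other summands vanish by the extension-by-zero convention, the term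
equals `∑_{i,j,α} δ_j(s_α) γ_{ij}(x_α) p(X, update S α i)`. -/
noncomputable def G2First {d n_s n_a : ℕ} (γ : Fin n_s → Fin n_s → E d → ℝ)
    (p : FS d n_s n_a) : FS d n_s n_a :=
  fun X S => ∑ i, ∑ j, ∑ α, deltaS j (S α) * γ i j (X α) * p X (Function.update S α i)

/-- The first-order adoption generator `G = −G₁ + G₂`. -/
noncomputable def GopFirst {d n_s n_a : ℕ} (γ : Fin n_s → Fin n_s → E d → ℝ)
    (p : FS d n_s n_a) : FS d n_s n_a :=
  fun X S => -(G1First γ p X S) + G2First γ p X S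

/-- Second-order adoption rate function
`f_{ij}^{(α)}(X,S) = δ_i(s_α) ∑_{β ≠ α} δ_j(s_β) c_{ij} d_r(x_α, x_β)`. -/
noncomputable def fSecond {d n_s n_a : ℕ} (c : Fin n_s → Fin n_s → ℝ) (r : ℝ)
    (i j : Fin n_s) (α : Fin n_a) (X : Fin n_a → E d) (S : Fin n_a → Fin n_s) : ℝ :=
  deltaS i (S α) * ∑ β ∈ Finset.univ.erase α, deltaS j (S β) * (c i j * dr r (X α) (X β))

/-- Outflow part `G₁ p = (∑_{i,j,α} f_{ij}^{(α)}) p` of the second-order adoption generator. -/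
noncomputable def G1Second {d n_s n_a : ℕ} (c : Fin n_s → Fin n_s → ℝ) (r : ℝ)
    (p : FS d n_s n_a) : FS d n_s n_a :=
  fun X S => (∑ i, ∑ j, ∑ α, fSecond c r i j α X S) * p X S

/-- Inflow part of the second-order adoption generator, the term
`∑_{i,j,α} f_{ij}^{(α)}(X, S + i e_α − j e_α) p(X, S + i e_α − j e_α)`; as in the
first-order case the only non-vanishing summands are those with `s_α = j`, giving
`∑_{i,j,α} δ_j(s_α) (∑_{β ≠ α} δ_j(s_β) c_{ij} d_r(x_α,x_β)) p(X, update S α i)`. -/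
noncomputable def G2Second {d n_s n_a : ℕ} (c : Fin n_s → Fin n_s → ℝ) (r : ℝ)
    (p : FS d n_s n_a) : FS d n_s n_a :=
  fun X S => ∑ i, ∑ j, ∑ α, deltaS j (S α) *
    (∑ β ∈ Finset.univ.erase α, deltaS j (S β) * (c i j * dr r (X α) (X β))) *
    p X (Function.update S α i)

/-- The second-order adoption generator `G = −G₁ + G₂`. -/
noncomputable def GopSecond {d n_s n_a : ℕ} (c : Fin n_s → Fin n_s → ℝ) (r : ℝ)
    (p : FS d n_s n_a) : FS d n_s n_a :=
  fun X S => -(G1Second c r p X S) + G2Second c r p X S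

/-- `b_{kl} = (∫_{A_k} ∫_{A_l} d_r(x₁,x₂) dx₂ dx₁)/(μ(A_k) μ(A_l))`. -/
noncomputable def bOf {d m : ℕ} (A : Fin m → Set (E d)) (r : ℝ) (k l : Fin m) : ℝ :=
  (∫ x in A k, ∫ y in A l, dr r x y) / ((volume (A k)).toReal * (volume (A l)).toReal)

/-- The normalized ansatz functions `Φ̂_N = Φ_N / ⟨Φ_N, 𝟙⟩`. -/
noncomputable def Phihat {d m n_s n_a : ℕ} (Xdom : Set (E d)) (A : Fin m → Set (E d))
    (N : Fin n_s → Fin m → ℤ) : FS d n_s n_a :=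
  fun X S => Phi A N X S / ip Xdom (Phi (n_a := n_a) A N) (one d n_s n_a)

/-- The Galerkin projection `Q v = ∑_{N ∈ M_{n_a}} (⟨Φ_N, v⟩/⟨Φ_N, 𝟙⟩) Φ_N`. -/
noncomputable def Qproj {d m n_s n_a : ℕ} (Xdom : Set (E d)) (A : Fin m → Set (E d))
    (v : FS d n_s n_a) : FS d n_s n_a :=
  fun X S => ∑ N ∈ Mset n_s m n_a,
    (ip Xdom (Phi (n_a := n_a) A N) v / ip Xdom (Phi (n_a := n_a) A N) (one d n_s n_a)) *
      Phi A N X S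

/-- The matrix representation `Ĥ_{NM} = ⟨Φ_M, H Φ_N⟩ / ⟨Φ_N, 𝟙⟩` of a projected operator. -/
noncomputable def Hhat {d m n_s n_a : ℕ} (Xdom : Set (E d)) (A : Fin m → Set (E d))
    (H : FS d n_s n_a →ₗ[ℝ] FS d n_s n_a) (N M : Fin n_s → Fin m → ℤ) : ℝ :=
  ip Xdom (Phi (n_a := n_a) A M) (H (Phi A N)) / ip Xdom (Phi (n_a := n_a) A N) (one d n_s n_a)

section Aux
variable {d m n_s n_a : ℕ}

/-- status-box count matrix of a configuration `(S, κ)`. -/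
def cnt (S : Fin n_a → Fin n_s) (κ : Fin n_a → Fin m) (i : Fin n_s) (k : Fin m) : ℕ :=
  (Finset.univ.filter fun α => κ α = k ∧ S α = i).card

/-- indicator that the count matrix of `(S,κ)` is `P`. -/
noncomputable def phi (P : Fin n_s → Fin m → ℤ) (S : Fin n_a → Fin n_s)
    (κ : Fin n_a → Fin m) : ℝ :=
  if ∀ i k, ((cnt S κ i k : ℕ) : ℤ) = P i k then 1 else 0

def cell (A : Fin m → Set (E d)) (κ : Fin n_a → Fin m) : Set (Fin n_a → E d) :=
  Set.univ.pi fun α => A (κ α)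

noncomputable def Wt (A : Fin m → Set (E d)) (κ : Fin n_a → Fin m) : ℝ :=
  ∏ α, (volume (A (κ α))).toReal

lemma cnt_cast (S : Fin n_a → Fin n_s) (κ : Fin n_a → Fin m) (i : Fin n_s) (k : Fin m) :
    ((cnt S κ i k : ℕ) : ℤ) = ∑ α, if κ α = k ∧ S α = i then (1 : ℤ) else 0 := by
  rw [cnt, Finset.card_filter]
  push_cast
  rfl

lemma occ_eq_cnt (A : Fin m → Set (E d)) (hAdisj : Pairwise (Disjoint on A))
    {X : Fin n_a → E d} {κ : Fin n_a → Fin m} (hX : X ∈ cell A κ)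
    (S : Fin n_a → Fin n_s) (i : Fin n_s) (k : Fin m) :
    occ A X S i k = cnt S κ i k := by
  rw [occ, cnt, ← Set.ncard_coe_finset]
  congr 1
  ext α
  simp only [Finset.coe_filter, Set.mem_setOf_eq, Finset.mem_univ, true_and]
  have hXα : X α ∈ A (κ α) := hX α (Set.mem_univ α)
  constructor
  · rintro ⟨h1, h2⟩
    refine ⟨?_, h2⟩
    by_contra hne
    exact Set.disjoint_left.mp (hAdisj hne) hXα h1
  · rintro ⟨rfl, h2⟩
    exact ⟨hXα, h2⟩

lemma Phi_eq_phi (A : Fin m → Set (E d)) (hAdisj : Pairwise (Disjoint on A))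
    {X : Fin n_a → E d} {κ : Fin n_a → Fin m} (hX : X ∈ cell A κ)
    (P : Fin n_s → Fin m → ℤ) (S : Fin n_a → Fin n_s) :
    Phi A P X S = phi P S κ := by
  unfold Phi phi
  congr 1
  simp only [eq_iff_iff]
  constructor <;> intro h i k <;> rw [← h i k, occ_eq_cnt A hAdisj hX]

lemma cnt_update_cast (S : Fin n_a → Fin n_s) (κ : Fin n_a → Fin m) (α : Fin n_a)
    (i : Fin n_s) (i' : Fin n_s) (k' : Fin m) :
    ((cnt (Function.update S α i) κ i' k' : ℕ) : ℤ)
      = (cnt S κ i' k' : ℤ) + Emat i (κ α) i' k' - Emat (S α) (κ α) i' k' := by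
  rw [cnt_cast, cnt_cast]
  rw [← Finset.add_sum_erase (a := α) _ _ (Finset.mem_univ α),
    ← Finset.add_sum_erase (a := α) (f := fun β => if κ β = k' ∧ S β = i' then (1:ℤ) else 0) _
      (Finset.mem_univ α)]
  have hrest : ∑ β ∈ Finset.univ.erase α,
      (if κ β = k' ∧ Function.update S α i β = i' then (1:ℤ) else 0)
      = ∑ β ∈ Finset.univ.erase α, (if κ β = k' ∧ S β = i' then (1:ℤ) else 0) := by
    refine Finset.sum_congr rfl fun β hβ => ?_
    rw [Function.update_of_ne (Finset.ne_of_mem_erase hβ)]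
  rw [hrest]
  simp only [Function.update_self, Emat]
  have : ∀ (a b : Fin n_s), (if κ α = k' ∧ a = i' then (1:ℤ) else 0)
      = if i' = a ∧ k' = κ α then 1 else 0 := by
    intro a b
    congr 1
    simp only [eq_iff_iff]
    constructor <;> rintro ⟨h1, h2⟩ <;> exact ⟨h2.symm, h1.symm⟩
  rw [this i i, this (S α) (S α)]
  ring

end Aux
section Aux2
variable {d m n_a : ℕ}

def pairEquiv {n : ℕ} (α β : Fin n) (hab : α ≠ β) :
    Fin 2 ≃ {γ : Fin n // γ = α ∨ γ = β} where
  toFun t := if t = 0 then ⟨α, Or.inl rfl⟩ else ⟨β, Or.inr rfl⟩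
  invFun γ := if γ.1 = α then 0 else 1
  left_inv t := by fin_cases t <;> simp [Ne.symm hab]
  right_inv γ := by
    rcases γ with ⟨γ, hγ | hγ⟩ <;> subst hγ <;> refine Subtype.ext ?_ <;>
      simp [Ne.symm hab]

lemma measurable_dr2 (r : ℝ) : Measurable (fun z : E d × E d => dr r z.1 z.2) := by
  have hs : MeasurableSet {z : E d × E d | dist z.1 z.2 ≤ r} :=
    (isClosed_le (continuous_fst.dist continuous_snd) continuous_const).measurableSet
  unfold dr
  exact Measurable.ite hs measurable_const measurable_const

lemma dr_abs_le (r : ℝ) (x y : E d) : ‖dr r x y‖ ≤ 1 := by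
  unfold dr; split_ifs <;> simp

lemma cell_measurable (A : Fin m → Set (E d)) (hAmeas : ∀ k, MeasurableSet (A k))
    (κ : Fin n_a → Fin m) : MeasurableSet (cell A κ) :=
  MeasurableSet.univ_pi fun γ => hAmeas (κ γ)

lemma integral_cell_dr (A : Fin m → Set (E d)) (hAmeas : ∀ k, MeasurableSet (A k))
    (hAfin : ∀ k, volume (A k) ≠ ⊤) (r : ℝ) (κ : Fin n_a → Fin m)
    {α β : Fin n_a} (hab : α ≠ β) :
    ∫ X in cell A κ, dr r (X α) (X β)
      = (∫ x in A (κ α), ∫ y in A (κ β), dr r x y) *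
        ∏ γ ∈ (Finset.univ.erase α).erase β, (volume (A (κ γ))).toReal := by
  classical
  set p : Fin n_a → Prop := fun γ => γ = α ∨ γ = β with hp
  have hpa : p α := Or.inl rfl
  have hpb : p β := Or.inr rfl
  set a0 : Subtype p := ⟨α, hpa⟩ with ha0
  set b0 : Subtype p := ⟨β, hpb⟩ with hb0
  set g1 : ({γ // p γ} → E d) → ℝ := fun y =>
    dr r (y a0) (y b0) * ∏ γ : {γ // p γ},
      Set.indicator (A (κ γ.1)) (fun _ => (1:ℝ)) (y γ) with hg1def
  set g2 : ({γ // ¬ p γ} → E d) → ℝ := fun z =>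
    ∏ γ : {γ // ¬ p γ}, Set.indicator (A (κ γ.1)) (fun _ => (1:ℝ)) (z γ) with hg2def
  have key : ∀ X : Fin n_a → E d,
      (cell A κ).indicator (fun X => dr r (X α) (X β)) X
        = g1 (fun γ => X γ.1) * g2 (fun γ => X γ.1) := by
    intro X
    by_cases hX : X ∈ cell A κ
    · rw [Set.indicator_of_mem hX]
      have h1 : ∀ γ : Fin n_a, Set.indicator (A (κ γ)) (fun _ => (1:ℝ)) (X γ) = 1 :=
        fun γ => Set.indicator_of_mem (hX γ (Set.mem_univ γ)) _
      simp only [hg1def, hg2def, h1, Finset.prod_const_one, mul_one]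
      rfl
    · rw [Set.indicator_of_notMem hX]
      obtain ⟨γ0, -, hγ0⟩ : ∃ γ0 ∈ Set.univ, X γ0 ∉ A (κ γ0) := by
        simpa [cell, Set.mem_pi] using hX
      have hz : Set.indicator (A (κ γ0)) (fun _ => (1:ℝ)) (X γ0) = 0 :=
        Set.indicator_of_notMem hγ0 _
      by_cases hpγ : p γ0
      · have h0 : g1 (fun γ : {γ // p γ} => X γ.1) = 0 := by
          simp only [hg1def]
          rw [Finset.prod_eq_zero (Finset.mem_univ (⟨γ0, hpγ⟩ : {γ // p γ})) hz, mul_zero]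
        rw [h0, zero_mul]
      · have h0 : g2 (fun γ : {γ // ¬ p γ} => X γ.1) = 0 :=
          Finset.prod_eq_zero (Finset.mem_univ (⟨γ0, hpγ⟩ : {γ // ¬ p γ})) hz
        rw [h0, mul_zero]
  rw [← integral_indicator (cell_measurable A hAmeas κ)]
  have step1 : ∫ X, (cell A κ).indicator (fun X => dr r (X α) (X β)) X
      = ∫ z : ({γ // p γ} → E d) × ({γ // ¬ p γ} → E d), g1 z.1 * g2 z.2 := by
    rw [← (volume_preserving_piEquivPiSubtypeProd (fun _ : Fin n_a => E d) p).integral_comp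
      (MeasurableEquiv.measurableEmbedding _) (fun z => g1 z.1 * g2 z.2)]
    exact integral_congr_ae (Filter.Eventually.of_forall fun X => key X)
  rw [step1, Measure.volume_eq_prod, integral_prod_mul]
  -- compute the second factor
  have hg2 : (∫ z, g2 z) = ∏ γ : {γ // ¬ p γ}, (volume (A (κ γ.1))).toReal := by
    have hind : g2 = fun z => (Set.pi Set.univ fun γ : {γ // ¬ p γ} => A (κ γ.1)).indicator
        (fun _ => (1:ℝ)) z := by
      funext z
      by_cases hz : z ∈ Set.pi Set.univ fun γ : {γ // ¬ p γ} => A (κ γ.1)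
      · rw [Set.indicator_of_mem hz]
        exact Finset.prod_eq_one fun γ _ => Set.indicator_of_mem (hz γ (Set.mem_univ γ)) _
      · rw [Set.indicator_of_notMem hz]
        obtain ⟨γ0, -, hγ0⟩ : ∃ γ0 ∈ Set.univ, z γ0 ∉ A (κ γ0.1) := by
          simpa [Set.mem_pi] using hz
        exact Finset.prod_eq_zero (Finset.mem_univ γ0) (Set.indicator_of_notMem hγ0 _)
    rw [hind, integral_indicator_const (1:ℝ) (MeasurableSet.univ_pi fun γ => hAmeas _),
      smul_eq_mul, mul_one, measureReal_def, volume_pi_pi]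
    exact ENNReal.toReal_prod _ _
  -- compute the first factor
  set e2 : Fin 2 ≃ {γ // p γ} := pairEquiv α β hab with he2
  have he0 : e2 0 = a0 := by rw [he2]; exact Subtype.ext rfl
  have he1 : e2 1 = b0 := by rw [he2]; exact Subtype.ext rfl
  have hg1 : (∫ y, g1 y) = ∫ x in A (κ α), ∫ y in A (κ β), dr r x y := by
    rw [← (volume_measurePreserving_piCongrLeft (fun _ : {γ // p γ} => E d) e2).integral_comp
      (MeasurableEquiv.measurableEmbedding _) g1]
    have happ : ∀ x : Fin 2 → E d,
        g1 ((MeasurableEquiv.piCongrLeft (fun _ : {γ // p γ} => E d) e2) x)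
          = dr r (x 0) (x 1) * (Set.indicator (A (κ α)) (fun _ => (1:ℝ)) (x 0)
              * Set.indicator (A (κ β)) (fun _ => (1:ℝ)) (x 1)) := by
      intro x
      have hcoe : ⇑(MeasurableEquiv.piCongrLeft (fun _ : {γ // p γ} => E d) e2)
          = ⇑(Equiv.piCongrLeft (fun _ : {γ // p γ} => E d) e2) := rfl
      set y := (Equiv.piCongrLeft (fun _ : {γ // p γ} => E d) e2) x with hy
      have hy0 : y a0 = x 0 := by
        rw [← he0, hy, Equiv.piCongrLeft_apply_apply]
      have hy1 : y b0 = x 1 := by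
        rw [← he1, hy, Equiv.piCongrLeft_apply_apply]
      have hprod : (∏ γ : {γ // p γ},
          Set.indicator (A (κ γ.1)) (fun _ => (1:ℝ)) (y γ))
            = Set.indicator (A (κ α)) (fun _ => (1:ℝ)) (x 0)
              * Set.indicator (A (κ β)) (fun _ => (1:ℝ)) (x 1) := by
        rw [← Equiv.prod_comp e2 (fun γ : {γ // p γ} =>
          Set.indicator (A (κ γ.1)) (fun _ => (1:ℝ)) (y γ))]
        rw [Fin.prod_univ_two, he0, he1, hy0, hy1, ha0, hb0]
      rw [hcoe]
      show g1 y = _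
      rw [hg1def]
      simp only []
      rw [hy0, hy1, hprod]
    rw [integral_congr_ae (Filter.Eventually.of_forall happ)]
    have hstep : (∫ a : Fin 2 → E d, dr r (a 0) (a 1)
          * (Set.indicator (A (κ α)) (fun _ => (1:ℝ)) (a 0)
            * Set.indicator (A (κ β)) (fun _ => (1:ℝ)) (a 1)))
        = ∫ z : E d × E d, dr r z.1 z.2
            * (Set.indicator (A (κ α)) (fun _ => (1:ℝ)) z.1
              * Set.indicator (A (κ β)) (fun _ => (1:ℝ)) z.2)
            ∂((volume : Measure (E d)).prod volume) :=
      (measurePreserving_finTwoArrow (volume : Measure (E d))).integral_comp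
        (MeasurableEquiv.finTwoArrow.measurableEmbedding)
        (fun z : E d × E d => dr r z.1 z.2
          * (Set.indicator (A (κ α)) (fun _ => (1:ℝ)) z.1
            * Set.indicator (A (κ β)) (fun _ => (1:ℝ)) z.2))
    rw [hstep]
    have hind2 : (fun z : E d × E d => dr r z.1 z.2
        * (Set.indicator (A (κ α)) (fun _ => (1:ℝ)) z.1
          * Set.indicator (A (κ β)) (fun _ => (1:ℝ)) z.2))
        = (A (κ α) ×ˢ A (κ β)).indicator (fun z : E d × E d => dr r z.1 z.2) := by
      funext z
      by_cases hz : z ∈ A (κ α) ×ˢ A (κ β)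
      · rw [Set.indicator_of_mem hz, Set.indicator_of_mem hz.1, Set.indicator_of_mem hz.2]
        ring
      · rw [Set.indicator_of_notMem hz]
        rcases (not_and_or.mp hz) with h | h
        · rw [Set.indicator_of_notMem h]; ring
        · rw [Set.indicator_of_notMem h]; ring
    rw [hind2, integral_indicator ((hAmeas (κ α)).prod (hAmeas (κ β)))]
    have hint : IntegrableOn (fun z : E d × E d => dr r z.1 z.2)
        (A (κ α) ×ˢ A (κ β)) (volume.prod volume) := by
      have hconst : IntegrableOn (fun _ : E d × E d => (1:ℝ))
          (A (κ α) ×ˢ A (κ β)) (volume.prod volume) :=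
        integrableOn_const (LT.lt.ne (by
          rw [Measure.prod_prod]
          exact ENNReal.mul_lt_top (hAfin _).lt_top (hAfin _).lt_top))
      exact Integrable.mono' hconst
        ((measurable_dr2 r).aestronglyMeasurable.restrict)
        (Filter.Eventually.of_forall fun z => dr_abs_le r z.1 z.2)
    exact MeasureTheory.setIntegral_prod (μ := (volume : Measure (E d)))
      (ν := (volume : Measure (E d))) (fun z : E d × E d => dr r z.1 z.2) hint
  rw [hg1, hg2]
  congr 1
  have hfs : ∀ x : Fin n_a, x ∈ (Finset.univ.erase α).erase β ↔ ¬ p x := by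
    intro x
    simp only [Finset.mem_erase, Finset.mem_univ, and_true, hp]
    push_neg
    tauto
  rw [Finset.prod_subtype ((Finset.univ.erase α).erase β) hfs
    (fun γ => (volume (A (κ γ))).toReal)]

end Aux2
section Aux3
variable {d m n_s n_a : ℕ}

lemma cell_volume_lt_top (A : Fin m → Set (E d)) (hAfin : ∀ k, volume (A k) ≠ ⊤)
    (κ : Fin n_a → Fin m) : volume (cell A κ) < ⊤ := by
  rw [cell, volume_pi_pi]
  exact ENNReal.prod_lt_top fun γ _ => (hAfin (κ γ)).lt_top

set_option maxHeartbeats 1000000 in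
lemma integrableOn_dr_cell (A : Fin m → Set (E d)) (hAfin : ∀ k, volume (A k) ≠ ⊤)
    (r : ℝ) (κ : Fin n_a → Fin m) (α β : Fin n_a) :
    IntegrableOn (fun X : Fin n_a → E d => dr r (X α) (X β)) (cell A κ) volume := by
  have hconst : IntegrableOn (fun _ : Fin n_a → E d => (1:ℝ)) (cell A κ) volume :=
    integrableOn_const (LT.lt.ne (cell_volume_lt_top A hAfin κ))
  refine Integrable.mono' hconst ?_ (Filter.Eventually.of_forall fun X => dr_abs_le r _ _)
  have hs : MeasurableSet {X : Fin n_a → E d | dist (X α) (X β) ≤ r} :=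
    measurableSet_le (Measurable.dist (measurable_pi_apply α) (measurable_pi_apply β))
      measurable_const
  have hm : Measurable (fun X : Fin n_a → E d => dr r (X α) (X β)) := by
    unfold dr
    exact Measurable.ite hs measurable_const measurable_const
  exact hm.aestronglyMeasurable.restrict

lemma integral_cell_const (A : Fin m → Set (E d)) (κ : Fin n_a → Fin m) (v : ℝ) :
    ∫ _X in cell A κ, v = v * Wt A κ := by
  rw [setIntegral_const, smul_eq_mul, mul_comm]
  congr 1
  rw [cell, measureReal_def, volume_pi_pi, ENNReal.toReal_prod, Wt]

lemma dd_eq_bOf (A : Fin m → Set (E d)) (hAfin : ∀ k, volume (A k) ≠ ⊤)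
    (hApos : ∀ k, 0 < volume (A k)) (r : ℝ) (k l : Fin m) :
    ∫ x in A k, ∫ y in A l, dr r x y
      = bOf A r k l * ((volume (A k)).toReal * (volume (A l)).toReal) := by
  rw [bOf, div_mul_cancel₀]
  exact ne_of_gt (mul_pos (ENNReal.toReal_pos (ne_of_gt (hApos k)) (hAfin k))
    (ENNReal.toReal_pos (ne_of_gt (hApos l)) (hAfin l)))

lemma integral_cell_dr_b (A : Fin m → Set (E d)) (hAmeas : ∀ k, MeasurableSet (A k))
    (hAfin : ∀ k, volume (A k) ≠ ⊤) (hApos : ∀ k, 0 < volume (A k))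
    (r : ℝ) (κ : Fin n_a → Fin m) {α β : Fin n_a} (hab : α ≠ β) :
    ∫ X in cell A κ, dr r (X α) (X β) = bOf A r (κ α) (κ β) * Wt A κ := by
  rw [integral_cell_dr A hAmeas hAfin r κ hab, dd_eq_bOf A hAfin hApos r]
  have h1 : Wt A κ = (volume (A (κ α))).toReal
      * ((volume (A (κ β))).toReal
        * ∏ γ ∈ (Finset.univ.erase α).erase β, (volume (A (κ γ))).toReal) := by
    rw [Wt, ← Finset.mul_prod_erase Finset.univ (fun γ => (volume (A (κ γ))).toReal)
        (Finset.mem_univ α),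
      ← Finset.mul_prod_erase (Finset.univ.erase α) (fun γ => (volume (A (κ γ))).toReal)
        (Finset.mem_erase.mpr ⟨hab.symm, Finset.mem_univ β⟩)]
  rw [h1]
  ring

/-- the coefficient of `dr r (X α) (X β)` in the simplified integrand on a cell. -/
noncomputable def coef (c : Fin n_s → Fin n_s → ℝ) (M N : Fin n_s → Fin m → ℤ)
    (S : Fin n_a → Fin n_s) (κ : Fin n_a → Fin m) (i j : Fin n_s) (α β : Fin n_a) : ℝ :=
  deltaS j (S α) * deltaS j (S β) * c i j * (phi M S κ * phi N (Function.update S α i) κ)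

lemma integrand_on_cell (A : Fin m → Set (E d)) (hAdisj : Pairwise (Disjoint on A))
    (c : Fin n_s → Fin n_s → ℝ) (r : ℝ) (M N : Fin n_s → Fin m → ℤ)
    (S : Fin n_a → Fin n_s) (κ : Fin n_a → Fin m) {X : Fin n_a → E d}
    (hX : X ∈ cell A κ) :
    Phi A M X S * G2Second c r (Phi A N) X S
      = ∑ i, ∑ j, ∑ α, ∑ β ∈ Finset.univ.erase α,
          coef c M N S κ i j α β * dr r (X α) (X β) := by
  rw [G2Second]
  simp only [Phi_eq_phi A hAdisj hX]
  simp only [Finset.mul_sum, Finset.sum_mul]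
  refine Finset.sum_congr rfl fun i _ => Finset.sum_congr rfl fun j _ =>
    Finset.sum_congr rfl fun α _ => ?_
  refine Finset.sum_congr rfl fun β _ => ?_
  simp only [coef]
  ring

lemma integrableOn_integrand_cell (A : Fin m → Set (E d)) (hAmeas : ∀ k, MeasurableSet (A k))
    (hAdisj : Pairwise (Disjoint on A)) (hAfin : ∀ k, volume (A k) ≠ ⊤)
    (c : Fin n_s → Fin n_s → ℝ) (r : ℝ) (M N : Fin n_s → Fin m → ℤ)
    (S : Fin n_a → Fin n_s) (κ : Fin n_a → Fin m) :
    IntegrableOn (fun X => Phi A M X S * G2Second c r (Phi A N) X S) (cell A κ) volume := by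
  have hsimp : IntegrableOn (fun X : Fin n_a → E d => ∑ i, ∑ j, ∑ α,
      ∑ β ∈ Finset.univ.erase α, coef c M N S κ i j α β * dr r (X α) (X β))
      (cell A κ) volume := by
    refine integrable_finset_sum _ fun i _ => integrable_finset_sum _ fun j _ =>
      integrable_finset_sum _ fun α _ => integrable_finset_sum _ fun β _ => ?_
    exact (integrableOn_dr_cell A hAfin r κ α β).const_mul _
  exact hsimp.congr_fun (fun X hX => (integrand_on_cell A hAdisj c r M N S κ hX).symm)
    (cell_measurable A hAmeas κ)

lemma integral_integrand_cell (A : Fin m → Set (E d)) (hAmeas : ∀ k, MeasurableSet (A k))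
    (hAdisj : Pairwise (Disjoint on A)) (hAfin : ∀ k, volume (A k) ≠ ⊤)
    (hApos : ∀ k, 0 < volume (A k))
    (c : Fin n_s → Fin n_s → ℝ) (r : ℝ) (M N : Fin n_s → Fin m → ℤ)
    (S : Fin n_a → Fin n_s) (κ : Fin n_a → Fin m) :
    ∫ X in cell A κ, Phi A M X S * G2Second c r (Phi A N) X S
      = ∑ i, ∑ j, ∑ α, ∑ β ∈ Finset.univ.erase α,
          coef c M N S κ i j α β * (bOf A r (κ α) (κ β) * Wt A κ) := by
  rw [setIntegral_congr_fun (cell_measurable A hAmeas κ)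
    (fun X hX => integrand_on_cell A hAdisj c r M N S κ hX)]
  rw [integral_finset_sum _ fun i _ => integrable_finset_sum _ fun j _ =>
    integrable_finset_sum _ fun α _ => integrable_finset_sum _ fun β _ =>
      (integrableOn_dr_cell A hAfin r κ α β).const_mul _]
  refine Finset.sum_congr rfl fun i _ => ?_
  rw [integral_finset_sum _ fun j _ => integrable_finset_sum _ fun α _ =>
    integrable_finset_sum _ fun β _ => (integrableOn_dr_cell A hAfin r κ α β).const_mul _]
  refine Finset.sum_congr rfl fun j _ => ?_
  rw [integral_finset_sum _ fun α _ => integrable_finset_sum _ fun β _ =>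
    (integrableOn_dr_cell A hAfin r κ α β).const_mul _]
  refine Finset.sum_congr rfl fun α _ => ?_
  rw [integral_finset_sum _ fun β _ => (integrableOn_dr_cell A hAfin r κ α β).const_mul _]
  refine Finset.sum_congr rfl fun β hβ => ?_
  rw [integral_const_mul,
    integral_cell_dr_b A hAmeas hAfin hApos r κ ((Finset.mem_erase.mp hβ).1.symm)]

lemma posSet_eq_biUnion {Xdom : Set (E d)} (A : Fin m → Set (E d))
    (hAcover : (⋃ k, A k) = Xdom) :
    posSet Xdom n_a = ⋃ κ ∈ (Finset.univ : Finset (Fin n_a → Fin m)), cell A κ := by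
  ext X
  constructor
  · intro h
    have hch : ∀ α, ∃ k, X α ∈ A k := fun α => by
      have h2 : X α ∈ Xdom := h α (Set.mem_univ α)
      rw [← hAcover] at h2
      exact Set.mem_iUnion.mp h2
    obtain ⟨κ, hκ⟩ := Classical.axiomOfChoice hch
    refine Set.mem_biUnion (Finset.mem_coe.mpr (Finset.mem_univ κ)) ?_
    exact fun α _ => hκ α
  · intro h
    obtain ⟨κ, -, hκ⟩ := Set.mem_iUnion₂.mp h
    intro α _
    rw [← hAcover]
    exact Set.mem_iUnion.mpr ⟨κ α, hκ α (Set.mem_univ α)⟩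

lemma cells_disjoint (A : Fin m → Set (E d)) (hAdisj : Pairwise (Disjoint on A)) :
    Set.Pairwise (↑(Finset.univ : Finset (Fin n_a → Fin m)) : Set (Fin n_a → Fin m))
      (Disjoint on fun κ => cell A κ) := by
  intro κ _ κ' _ hne
  obtain ⟨α, hα⟩ := Function.ne_iff.mp hne
  refine Set.disjoint_left.mpr fun X hX hX' => ?_
  exact Set.disjoint_left.mp (hAdisj hα) (hX α trivial) (hX' α trivial)

lemma integral_posSet_eq_sum {Xdom : Set (E d)} (A : Fin m → Set (E d))
    (hAmeas : ∀ k, MeasurableSet (A k)) (hAdisj : Pairwise (Disjoint on A))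
    (hAcover : (⋃ k, A k) = Xdom) (f : (Fin n_a → E d) → ℝ)
    (hf : ∀ κ : Fin n_a → Fin m, IntegrableOn f (cell A κ) volume) :
    ∫ X in posSet Xdom n_a, f X = ∑ κ : Fin n_a → Fin m, ∫ X in cell A κ, f X := by
  rw [posSet_eq_biUnion A hAcover,
    integral_biUnion_finset Finset.univ (fun κ _ => cell_measurable A hAmeas κ)
      (cells_disjoint A hAdisj) (fun κ _ => hf κ)]

end Aux3
section Aux4
variable {d m n_s n_a : ℕ}

lemma matEq_iff {M N : Fin n_s → Fin m → ℤ} {j i : Fin n_s} {k : Fin m} :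
    M = N + Emat j k - Emat i k ↔ ∀ a b, M a b = N a b + Emat j k a b - Emat i k a b := by
  constructor
  · intro h a b
    rw [h]
    rfl
  · intro h
    funext a b
    exact h a b

lemma emat_unique {i j i' j' : Fin n_s} {k k' : Fin m} (hij : i ≠ j) (hij' : i' ≠ j')
    (h : ∀ a b, Emat j k a b - Emat i k a b = Emat j' k' a b - Emat i' k' a b) :
    i = i' ∧ j = j' ∧ k = k' := by
  have h1 := h j k
  have h2 := h i k
  simp only [Emat] at h1 h2
  have hTT : (if True ∧ True then (1:ℤ) else 0) = 1 := if_pos ⟨trivial, trivial⟩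
  rw [if_neg (fun hc : j = i ∧ True => hij hc.1.symm)] at h1
  rw [if_neg (fun hc : i = j ∧ True => hij hc.1)] at h2
  rw [hTT] at h1 h2 <;> try skip
  have hA : j = j' ∧ k = k' := by
    by_contra hA
    rw [if_neg hA] at h1
    by_cases hB : j = i' ∧ k = k'
    · rw [if_pos hB] at h1; omega
    · rw [if_neg hB] at h1; omega
  have hB : i = i' ∧ k = k' := by
    by_contra hB
    rw [if_neg hB] at h2
    by_cases hC : i = j' ∧ k = k'
    · rw [if_pos hC] at h2; omega
    · rw [if_neg hC] at h2; omega
  exact ⟨hB.1, hA.1, hA.2⟩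

lemma phi_sq (P : Fin n_s → Fin m → ℤ) (S : Fin n_a → Fin n_s) (κ : Fin n_a → Fin m) :
    phi P S κ * phi P S κ = phi P S κ := by
  unfold phi
  split_ifs <;> ring

lemma phi_flip {M N : Fin n_s → Fin m → ℤ} {i0 j0 : Fin n_s} {k0 : Fin m}
    (hM : ∀ a b, M a b = N a b + Emat j0 k0 a b - Emat i0 k0 a b)
    {S : Fin n_a → Fin n_s} {κ : Fin n_a → Fin m} {α : Fin n_a}
    (hSα : S α = j0) (hκα : κ α = k0) :
    phi M S κ = phi N (Function.update S α i0) κ := by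
  unfold phi
  congr 1
  simp only [eq_iff_iff]
  constructor
  · intro h a b
    rw [cnt_update_cast, hSα, hκα, h a b, hM a b]
    ring
  · intro h a b
    have h2 := h a b
    rw [cnt_update_cast S κ α i0 a b, hSα, hκα] at h2
    rw [hM a b]
    omega

/-- the crucial characterization of the coefficient in the matched case. -/
lemma coef_char {M N : Fin n_s → Fin m → ℤ} {i0 j0 : Fin n_s} {k0 : Fin m}
    (hij0 : i0 ≠ j0)
    (hM : ∀ a b, M a b = N a b + Emat j0 k0 a b - Emat i0 k0 a b)
    (c : Fin n_s → Fin n_s → ℝ) (hcdiag : ∀ i, c i i = 0)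
    (S : Fin n_a → Fin n_s) (κ : Fin n_a → Fin m) (i j : Fin n_s) (α β : Fin n_a) :
    coef c M N S κ i j α β
      = (if i = i0 then (1:ℝ) else 0) * (if j = j0 then 1 else 0)
        * (if S α = j0 then 1 else 0) * (if S β = j0 then 1 else 0)
        * (if κ α = k0 then 1 else 0) * phi M S κ * c i0 j0 := by
  unfold coef deltaS
  by_cases hφM : ∀ a b, ((cnt S κ a b : ℕ) : ℤ) = M a b
  swap
  · rw [phi, if_neg hφM]
    ring
  rw [phi, if_pos hφM]
  by_cases hSα : S α = j
  swap
  · rw [if_neg hSα]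
    by_cases hj : j = j0
    · subst hj
      rw [if_neg hSα]
      ring
    · rw [if_neg hj]
      ring
  rw [if_pos hSα]
  by_cases hSβ : S β = j
  swap
  · rw [if_neg hSβ]
    by_cases hj : j = j0
    · subst hj
      rw [if_neg hSβ]
      ring
    · rw [if_neg hj]
      ring
  rw [if_pos hSβ]
  by_cases hij : i = j
  · subst hij
    rw [hcdiag i]
    by_cases hii0 : i = i0
    · subst hii0
      rw [if_neg (fun hc : i = j0 => hij0 hc)]
      ring
    · rw [if_neg hii0]
      ring
  -- i ≠ j
  by_cases hφN : ∀ a b, ((cnt (Function.update S α i) κ a b : ℕ) : ℤ) = N a b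
  · -- deduce i = i0, j = j0, κ α = k0
    have hkey : ∀ a b, Emat j0 k0 a b - Emat i0 k0 a b
        = Emat j (κ α) a b - Emat i (κ α) a b := by
      intro a b
      have h1 := hφN a b
      rw [cnt_update_cast S κ α i a b, hSα, hφM a b, hM a b] at h1
      omega
    obtain ⟨hi, hj, hk⟩ := emat_unique hij0 hij hkey
    rw [phi, if_pos hφN, if_pos hi.symm, if_pos (hSα.trans hj.symm),
      if_pos ((hSβ.trans hj.symm)), if_pos hk.symm, if_pos hj.symm]
    rw [← hi, ← hj]
    ring
  · rw [phi, if_neg hφN]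
    by_cases hii0 : i = i0
    swap
    · rw [if_neg hii0]; ring
    by_cases hjj0 : j = j0
    swap
    · rw [if_neg hjj0]; ring
    by_cases hκα : κ α = k0
    swap
    · rw [if_neg hκα]; ring
    -- contradiction: the phi-N condition must hold
    exfalso
    apply hφN
    intro a b
    rw [cnt_update_cast S κ α i a b, hSα, hφM a b, hM a b, hii0, hjj0, hκα]
    ring

/-- real-cast count as a sum of indicators. -/
lemma cnt_castR (S : Fin n_a → Fin n_s) (κ : Fin n_a → Fin m) (i : Fin n_s) (k : Fin m) :
    ((cnt S κ i k : ℕ) : ℝ) = ∑ α, if κ α = k ∧ S α = i then (1:ℝ) else 0 := by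
  rw [cnt, Finset.card_filter]
  push_cast
  rfl

end Aux4
section Aux5
variable {d m n_s n_a : ℕ}

lemma pull_if {γ : Type*} (s : Finset γ) (P : Prop) [Decidable P] (g : γ → ℝ) :
    (∑ x ∈ s, if P then g x else 0) = if P then ∑ x ∈ s, g x else 0 := by
  split_ifs <;> simp

lemma boole_collapse (P : Prop) [Decidable P] (x : ℝ) :
    (if P then (1:ℝ) else 0) * x = if P then x else 0 := by
  split_ifs <;> ring

lemma pairsum {M N : Fin n_s → Fin m → ℤ} {i0 j0 : Fin n_s} {k0 : Fin m}
    (hij0 : i0 ≠ j0) (hMab : ∀ a b, M a b = N a b + Emat j0 k0 a b - Emat i0 k0 a b)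
    (S : Fin n_a → Fin n_s) (κ : Fin n_a → Fin m)
    (hφM : ∀ a b', ((cnt S κ a b' : ℕ) : ℤ) = M a b') (b : Fin m → ℝ) :
    ∑ α, ∑ β ∈ Finset.univ.erase α,
        (if S α = j0 then (1:ℝ) else 0) * (if S β = j0 then 1 else 0)
          * (if κ α = k0 then 1 else 0) * b (κ β)
      = ∑ l, b l * ((((N j0 k0 : ℤ) : ℝ) + 1) * ((N j0 l : ℤ) : ℝ)) := by
  classical
  have hcR : ∀ (i : Fin n_s) (k : Fin m), ((cnt S κ i k : ℕ) : ℝ) = ((M i k : ℤ) : ℝ) := by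
    intro i k
    exact_mod_cast congrArg (Int.cast : ℤ → ℝ) (hφM i k)
  have hMj0k0 : ((M j0 k0 : ℤ) : ℝ) = ((N j0 k0 : ℤ) : ℝ) + 1 := by
    have e1 : Emat j0 k0 j0 k0 = (1:ℤ) := if_pos ⟨rfl, rfl⟩
    have e2 : Emat i0 k0 j0 k0 = (0:ℤ) := if_neg (fun hc => hij0 hc.1.symm)
    rw [hMab j0 k0, e1, e2]
    push_cast
    ring
  have hMj0l : ∀ l, ((M j0 l : ℤ) : ℝ)
      = ((N j0 l : ℤ) : ℝ) + (if l = k0 then 1 else 0) := by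
    intro l
    have e2 : Emat i0 k0 j0 l = (0:ℤ) := if_neg (fun hc => hij0 hc.1.symm)
    by_cases hl : l = k0
    · have e1 : Emat j0 k0 j0 l = (1:ℤ) := if_pos ⟨rfl, hl⟩
      rw [hMab j0 l, e1, e2, if_pos hl]
      push_cast
      ring
    · have e1 : Emat j0 k0 j0 l = (0:ℤ) := if_neg (fun hc => hl hc.2)
      rw [hMab j0 l, e1, e2, if_neg hl]
      push_cast
      ring
  -- Full sum over β of the (j0, box) indicator weighted by b
  set Full : ℝ := ∑ β, if S β = j0 then b (κ β) else 0 with hFull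
  have hFull_eq : Full = ∑ l, ((cnt S κ j0 l : ℕ) : ℝ) * b l := by
    rw [hFull]
    have h1 : ∀ β : Fin n_a, (if S β = j0 then b (κ β) else 0)
        = ∑ l, if κ β = l ∧ S β = j0 then b l else 0 := by
      intro β
      by_cases hS : S β = j0
      · rw [if_pos hS]
        have : ∀ l, (if κ β = l ∧ S β = j0 then b l else 0) = if κ β = l then b l else 0 :=
          fun l => if_congr (and_iff_left hS) rfl rfl
        rw [Finset.sum_congr rfl fun l _ => this l, Finset.sum_ite_eq Finset.univ (κ β) b,
          if_pos (Finset.mem_univ _)]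
      · rw [if_neg hS]
        have : ∀ l, (if κ β = l ∧ S β = j0 then b l else 0) = 0 :=
          fun l => if_neg (fun hc => hS hc.2)
        rw [Finset.sum_congr rfl fun l _ => this l, Finset.sum_const_zero]
    rw [Finset.sum_congr rfl fun β _ => h1 β, Finset.sum_comm]
    refine Finset.sum_congr rfl fun l _ => ?_
    rw [cnt_castR, Finset.sum_mul]
    exact Finset.sum_congr rfl fun β _ => (boole_collapse _ _).symm
  -- rewrite each α-term
  have hterm : ∀ α : Fin n_a, (∑ β ∈ Finset.univ.erase α,
      (if S α = j0 then (1:ℝ) else 0) * (if S β = j0 then 1 else 0)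
        * (if κ α = k0 then 1 else 0) * b (κ β))
      = if κ α = k0 ∧ S α = j0 then Full - b k0 else 0 := by
    intro α
    have h2 : ∀ β, (if S α = j0 then (1:ℝ) else 0) * (if S β = j0 then 1 else 0)
        * (if κ α = k0 then 1 else 0) * b (κ β)
        = if κ α = k0 ∧ S α = j0 then (if S β = j0 then b (κ β) else 0) else 0 := by
      intro β
      by_cases h1 : S α = j0 <;> by_cases h2 : S β = j0 <;> by_cases h3 : κ α = k0 <;>
        simp [h1, h2, h3]
    rw [Finset.sum_congr rfl fun β _ => h2 β, pull_if]
    by_cases hc : κ α = k0 ∧ S α = j0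
    · rw [if_pos hc, if_pos hc,
        Finset.sum_erase_eq_sub (f := fun β => if S β = j0 then b (κ β) else 0)
          (Finset.mem_univ α), if_pos hc.2, hc.1]
    · rw [if_neg hc, if_neg hc]
  rw [Finset.sum_congr rfl fun α _ => hterm α]
  -- collapse the α-sum to a count
  have hcount : (∑ α : Fin n_a, if κ α = k0 ∧ S α = j0 then Full - b k0 else 0)
      = ((cnt S κ j0 k0 : ℕ) : ℝ) * (Full - b k0) := by
    rw [cnt_castR, Finset.sum_mul]
    exact Finset.sum_congr rfl fun α _ => (boole_collapse _ _).symm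
  rw [hcount, hFull_eq]
  have hsum1 : ∑ l, ((cnt S κ j0 l : ℕ) : ℝ) * b l
      = (∑ l, ((N j0 l : ℤ) : ℝ) * b l) + b k0 := by
    have : ∀ l, ((cnt S κ j0 l : ℕ) : ℝ) * b l
        = ((N j0 l : ℤ) : ℝ) * b l + (if l = k0 then b l else 0) := by
      intro l
      rw [hcR j0 l, hMj0l l]
      by_cases hl : l = k0
      · rw [if_pos hl, if_pos hl]; ring
      · rw [if_neg hl, if_neg hl]; ring
    rw [Finset.sum_congr rfl fun l _ => this l, Finset.sum_add_distrib,
      Finset.sum_ite_eq' Finset.univ k0 b, if_pos (Finset.mem_univ _)]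
  rw [hsum1, hcR j0 k0, hMj0k0, add_sub_cancel_right, Finset.mul_sum]
  exact Finset.sum_congr rfl fun l _ => by ring

end Aux5
section Aux6
variable {d m n_s n_a : ℕ}

lemma Mval_j0k0 {M N : Fin n_s → Fin m → ℤ} {i0 j0 : Fin n_s} {k0 : Fin m}
    (hij0 : i0 ≠ j0) (hMab : ∀ a b, M a b = N a b + Emat j0 k0 a b - Emat i0 k0 a b) :
    M j0 k0 = N j0 k0 + 1 := by
  have e1 : Emat j0 k0 j0 k0 = (1:ℤ) := if_pos ⟨rfl, rfl⟩
  have e2 : Emat i0 k0 j0 k0 = (0:ℤ) := if_neg (fun hc => hij0 hc.1.symm)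
  rw [hMab j0 k0, e1, e2]
  ring

lemma coef_zero {M N : Fin n_s → Fin m → ℤ}
    (hnem : ¬∃ (i j : Fin n_s) (k : Fin m), i ≠ j ∧ M = N + Emat j k - Emat i k)
    (c : Fin n_s → Fin n_s → ℝ) (hcdiag : ∀ i, c i i = 0)
    (S : Fin n_a → Fin n_s) (κ : Fin n_a → Fin m) (i j : Fin n_s) (α β : Fin n_a) :
    coef c M N S κ i j α β = 0 := by
  unfold coef deltaS
  by_cases hSα : S α = j
  swap
  · rw [if_neg hSα]; ring
  by_cases hSβ : S β = j
  swap
  · rw [if_neg hSβ]; ring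
  by_cases hij : i = j
  · subst hij
    rw [hcdiag i]; ring
  by_cases hφM : ∀ a b', ((cnt S κ a b' : ℕ) : ℤ) = M a b'
  swap
  · rw [phi, if_neg hφM]; ring
  by_cases hφN : ∀ a b', ((cnt (Function.update S α i) κ a b' : ℕ) : ℤ) = N a b'
  swap
  · rw [phi, phi, if_neg hφN]; ring
  exfalso
  refine hnem ⟨i, j, κ α, hij, matEq_iff.mpr fun a b => ?_⟩
  have h1 := hφN a b
  rw [cnt_update_cast S κ α i a b, hSα, hφM a b] at h1
  omega

lemma flip_sum (A : Fin m → Set (E d)) {M N : Fin n_s → Fin m → ℤ}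
    {i0 j0 : Fin n_s} {k0 : Fin m}
    (hij0 : i0 ≠ j0) (hMab : ∀ a b, M a b = N a b + Emat j0 k0 a b - Emat i0 k0 a b) :
    (((N j0 k0 : ℤ) : ℝ) + 1)
        * (∑ S : Fin n_a → Fin n_s, ∑ κ : Fin n_a → Fin m, phi M S κ * Wt A κ)
      = ((N i0 k0 : ℤ) : ℝ)
        * (∑ S : Fin n_a → Fin n_s, ∑ κ : Fin n_a → Fin m, phi N S κ * Wt A κ) := by
  classical
  have hL : ∀ (S : Fin n_a → Fin n_s) (κ : Fin n_a → Fin m),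
      (((N j0 k0 : ℤ) : ℝ) + 1) * (phi M S κ * Wt A κ)
        = ((cnt S κ j0 k0 : ℕ) : ℝ) * (phi M S κ * Wt A κ) := by
    intro S κ
    rw [phi]
    split_ifs with h
    · have h3 : ((cnt S κ j0 k0 : ℕ) : ℤ) = N j0 k0 + 1 := by
        rw [h j0 k0, Mval_j0k0 hij0 hMab]
      have h2 : ((cnt S κ j0 k0 : ℕ) : ℝ) = ((N j0 k0 : ℤ) : ℝ) + 1 := by
        exact_mod_cast congrArg (Int.cast : ℤ → ℝ) h3
      rw [h2]
    · ring
  have hR : ∀ (S : Fin n_a → Fin n_s) (κ : Fin n_a → Fin m),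
      ((N i0 k0 : ℤ) : ℝ) * (phi N S κ * Wt A κ)
        = ((cnt S κ i0 k0 : ℕ) : ℝ) * (phi N S κ * Wt A κ) := by
    intro S κ
    rw [phi]
    split_ifs with h
    · have h2 : ((cnt S κ i0 k0 : ℕ) : ℝ) = ((N i0 k0 : ℤ) : ℝ) := by
        exact_mod_cast congrArg (Int.cast : ℤ → ℝ) (h i0 k0)
      rw [h2]
    · ring
  have expand : ∀ (P : Fin n_s → Fin m → ℤ) (v : Fin n_s),
      (∑ S : Fin n_a → Fin n_s, ∑ κ : Fin n_a → Fin m,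
          ((cnt S κ v k0 : ℕ) : ℝ) * (phi P S κ * Wt A κ))
        = ∑ κ : Fin n_a → Fin m, ∑ α : Fin n_a, ∑ S : Fin n_a → Fin n_s,
            (if κ α = k0 ∧ S α = v then phi P S κ * Wt A κ else 0) := by
    intro P v
    rw [Finset.sum_comm]
    refine Finset.sum_congr rfl fun κ _ => ?_
    have h1 : ∀ S : Fin n_a → Fin n_s, ((cnt S κ v k0 : ℕ) : ℝ) * (phi P S κ * Wt A κ)
        = ∑ α, if κ α = k0 ∧ S α = v then phi P S κ * Wt A κ else 0 := by
      intro S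
      rw [cnt_castR, Finset.sum_mul]
      exact Finset.sum_congr rfl fun α _ => boole_collapse _ _
    rw [Finset.sum_congr rfl fun S _ => h1 S, Finset.sum_comm]
  have main : ∀ (κ : Fin n_a → Fin m) (α : Fin n_a),
      (∑ S : Fin n_a → Fin n_s, if κ α = k0 ∧ S α = j0 then phi M S κ * Wt A κ else 0)
        = ∑ S : Fin n_a → Fin n_s, if κ α = k0 ∧ S α = i0 then phi N S κ * Wt A κ else 0 := by
    intro κ α
    by_cases hκ : κ α = k0
    swap
    · have z1 : ∀ S : Fin n_a → Fin n_s,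
          (if κ α = k0 ∧ S α = j0 then phi M S κ * Wt A κ else 0) = 0 :=
        fun S => if_neg (fun hc => hκ hc.1)
      have z2 : ∀ S : Fin n_a → Fin n_s,
          (if κ α = k0 ∧ S α = i0 then phi N S κ * Wt A κ else 0) = 0 :=
        fun S => if_neg (fun hc => hκ hc.1)
      rw [Finset.sum_congr rfl fun S _ => z1 S, Finset.sum_congr rfl fun S _ => z2 S]
    · have e1 : ∀ S : Fin n_a → Fin n_s,
          (if κ α = k0 ∧ S α = j0 then phi M S κ * Wt A κ else 0)
            = if S α = j0 then phi M S κ * Wt A κ else 0 :=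
        fun S => if_congr (and_iff_right hκ) rfl rfl
      have e2 : ∀ S : Fin n_a → Fin n_s,
          (if κ α = k0 ∧ S α = i0 then phi N S κ * Wt A κ else 0)
            = if S α = i0 then phi N S κ * Wt A κ else 0 :=
        fun S => if_congr (and_iff_right hκ) rfl rfl
      rw [Finset.sum_congr rfl fun S _ => e1 S, Finset.sum_congr rfl fun S _ => e2 S,
        ← Finset.sum_filter, ← Finset.sum_filter]
      refine Finset.sum_nbij' (fun S => Function.update S α i0)
        (fun S => Function.update S α j0) ?_ ?_ ?_ ?_ ?_
      · intro S hS
        simp only [Finset.mem_filter, Finset.mem_univ, true_and] at hS ⊢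
        exact Function.update_self α i0 S
      · intro S hS
        simp only [Finset.mem_filter, Finset.mem_univ, true_and] at hS ⊢
        exact Function.update_self α j0 S
      · intro S hS
        simp only [Finset.mem_filter, Finset.mem_univ, true_and] at hS
        show Function.update (Function.update S α i0) α j0 = S
        rw [Function.update_idem, ← hS, Function.update_eq_self]
      · intro S hS
        simp only [Finset.mem_filter, Finset.mem_univ, true_and] at hS
        show Function.update (Function.update S α j0) α i0 = S
        rw [Function.update_idem, ← hS, Function.update_eq_self]
      · intro S hS
        simp only [Finset.mem_filter, Finset.mem_univ, true_and] at hS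
        show phi M S κ * Wt A κ = phi N (Function.update S α i0) κ * Wt A κ
        rw [phi_flip hMab hS hκ]
  calc (((N j0 k0 : ℤ) : ℝ) + 1)
      * (∑ S : Fin n_a → Fin n_s, ∑ κ : Fin n_a → Fin m, phi M S κ * Wt A κ)
      = ∑ S : Fin n_a → Fin n_s, ∑ κ : Fin n_a → Fin m,
          ((cnt S κ j0 k0 : ℕ) : ℝ) * (phi M S κ * Wt A κ) := by
        rw [Finset.mul_sum]
        refine Finset.sum_congr rfl fun S _ => ?_
        rw [Finset.mul_sum]
        exact Finset.sum_congr rfl fun κ _ => hL S κ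
    _ = ∑ κ : Fin n_a → Fin m, ∑ α : Fin n_a, ∑ S : Fin n_a → Fin n_s,
          (if κ α = k0 ∧ S α = j0 then phi M S κ * Wt A κ else 0) := expand M j0
    _ = ∑ κ : Fin n_a → Fin m, ∑ α : Fin n_a, ∑ S : Fin n_a → Fin n_s,
          (if κ α = k0 ∧ S α = i0 then phi N S κ * Wt A κ else 0) :=
        Finset.sum_congr rfl fun κ _ => Finset.sum_congr rfl fun α _ => main κ α
    _ = ∑ S : Fin n_a → Fin n_s, ∑ κ : Fin n_a → Fin m,
          ((cnt S κ i0 k0 : ℕ) : ℝ) * (phi N S κ * Wt A κ) := (expand N i0).symm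
    _ = ((N i0 k0 : ℤ) : ℝ)
        * (∑ S : Fin n_a → Fin n_s, ∑ κ : Fin n_a → Fin m, phi N S κ * Wt A κ) := by
        rw [Finset.mul_sum]
        refine Finset.sum_congr rfl fun S _ => ?_
        rw [Finset.mul_sum]
        exact Finset.sum_congr rfl fun κ _ => (hR S κ).symm

end Aux6
section Aux7
variable {d m n_s n_a : ℕ}

lemma ip_M_G2 {Xdom : Set (E d)} (A : Fin m → Set (E d)) (hAmeas : ∀ k, MeasurableSet (A k))
    (hAdisj : Pairwise (Disjoint on A)) (hAfin : ∀ k, volume (A k) ≠ ⊤)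
    (hApos : ∀ k, 0 < volume (A k)) (hAcover : (⋃ k, A k) = Xdom)
    (c : Fin n_s → Fin n_s → ℝ) (r : ℝ) (M N : Fin n_s → Fin m → ℤ) :
    ip Xdom (Phi (n_a := n_a) A M) (G2Second c r (Phi A N))
      = (((volume Xdom).toReal * (n_s : ℝ)) ^ n_a)⁻¹ *
        ∑ S : Fin n_a → Fin n_s, ∑ κ : Fin n_a → Fin m, ∑ i, ∑ j, ∑ α,
          ∑ β ∈ Finset.univ.erase α,
            coef c M N S κ i j α β * (bOf A r (κ α) (κ β) * Wt A κ) := by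
  rw [ip]
  congr 1
  refine Finset.sum_congr rfl fun S _ => ?_
  rw [integral_posSet_eq_sum A hAmeas hAdisj hAcover _
    (fun κ => integrableOn_integrand_cell A hAmeas hAdisj hAfin c r M N S κ)]
  exact Finset.sum_congr rfl fun κ _ =>
    integral_integrand_cell A hAmeas hAdisj hAfin hApos c r M N S κ

lemma ip_N_N {Xdom : Set (E d)} (A : Fin m → Set (E d)) (hAmeas : ∀ k, MeasurableSet (A k))
    (hAdisj : Pairwise (Disjoint on A)) (hAfin : ∀ k, volume (A k) ≠ ⊤)
    (hAcover : (⋃ k, A k) = Xdom) (N : Fin n_s → Fin m → ℤ) :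
    ip Xdom (Phi (n_a := n_a) A N) (Phi A N)
      = (((volume Xdom).toReal * (n_s : ℝ)) ^ n_a)⁻¹ *
        ∑ S : Fin n_a → Fin n_s, ∑ κ : Fin n_a → Fin m, phi N S κ * Wt A κ := by
  rw [ip]
  congr 1
  refine Finset.sum_congr rfl fun S _ => ?_
  have heq : ∀ κ : Fin n_a → Fin m, Set.EqOn (fun X => Phi A N X S * Phi A N X S)
      (fun _X => phi N S κ) (cell A κ) := by
    intro κ X hX
    show Phi A N X S * Phi A N X S = phi N S κ
    rw [Phi_eq_phi A hAdisj hX, phi_sq]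
  have hint : ∀ κ : Fin n_a → Fin m,
      IntegrableOn (fun X => Phi A N X S * Phi A N X S) (cell A κ) volume := by
    intro κ
    exact (integrableOn_const (LT.lt.ne (cell_volume_lt_top A hAfin κ))).congr_fun
      (fun X hX => (heq κ hX).symm) (cell_measurable A hAmeas κ)
  rw [integral_posSet_eq_sum A hAmeas hAdisj hAcover _ hint]
  refine Finset.sum_congr rfl fun κ _ => ?_
  rw [setIntegral_congr_fun (cell_measurable A hAmeas κ) (heq κ), integral_cell_const]

lemma bigsum_eq (A : Fin m → Set (E d)) (r : ℝ) {M N : Fin n_s → Fin m → ℤ}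
    {i0 j0 : Fin n_s} {k0 : Fin m} (hij0 : i0 ≠ j0)
    (hMab : ∀ a b, M a b = N a b + Emat j0 k0 a b - Emat i0 k0 a b)
    (c : Fin n_s → Fin n_s → ℝ) (hcdiag : ∀ i, c i i = 0)
    (S : Fin n_a → Fin n_s) (κ : Fin n_a → Fin m) :
    (∑ i, ∑ j, ∑ α, ∑ β ∈ Finset.univ.erase α,
        coef c M N S κ i j α β * (bOf A r (κ α) (κ β) * Wt A κ))
      = (∑ l, bOf A r k0 l * ((((N j0 k0 : ℤ) : ℝ) + 1) * ((N j0 l : ℤ) : ℝ)))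
          * (c i0 j0 * Wt A κ * phi M S κ) := by
  classical
  set T : Fin n_a → Fin n_a → ℝ := fun α β =>
    (if S α = j0 then (1:ℝ) else 0) * (if S β = j0 then 1 else 0)
      * (if κ α = k0 then 1 else 0) * bOf A r k0 (κ β) with hT
  set D : ℝ := c i0 j0 * Wt A κ * phi M S κ with hD
  have step1 : ∀ (i j : Fin n_s) (α β : Fin n_a),
      coef c M N S κ i j α β * (bOf A r (κ α) (κ β) * Wt A κ)
        = (if i = i0 then (1:ℝ) else 0) * ((if j = j0 then (1:ℝ) else 0) * (T α β * D)) := by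
    intro i j α β
    rw [coef_char hij0 hMab c hcdiag]
    simp only [hT, hD]
    by_cases hk : κ α = k0
    · rw [hk]
      ring
    · rw [if_neg hk]
      ring
  have hcol : ∀ {γ : Type} [Fintype γ] [DecidableEq γ] (v0 : γ) (X : ℝ),
      (∑ v : γ, if v = v0 then X else 0) = X := by
    intro γ _ _ v0 X
    rw [Finset.sum_ite_eq' Finset.univ v0 (fun _ => X), if_pos (Finset.mem_univ _)]
  calc (∑ i, ∑ j, ∑ α, ∑ β ∈ Finset.univ.erase α,
        coef c M N S κ i j α β * (bOf A r (κ α) (κ β) * Wt A κ))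
      = ∑ i, (if i = i0 then (1:ℝ) else 0) * ∑ j, (if j = j0 then (1:ℝ) else 0)
          * (∑ α, ∑ β ∈ Finset.univ.erase α, T α β * D) := by
        refine Finset.sum_congr rfl fun i _ => ?_
        rw [Finset.mul_sum]
        refine Finset.sum_congr rfl fun j _ => ?_
        rw [Finset.mul_sum, Finset.mul_sum]
        refine Finset.sum_congr rfl fun α _ => ?_
        rw [Finset.mul_sum, Finset.mul_sum]
        exact Finset.sum_congr rfl fun β _ => step1 i j α β
    _ = ∑ α, ∑ β ∈ Finset.univ.erase α, T α β * D := by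
        have h2 : ∀ i : Fin n_s, (if i = i0 then (1:ℝ) else 0) * ∑ j, (if j = j0 then (1:ℝ) else 0)
            * (∑ α, ∑ β ∈ Finset.univ.erase α, T α β * D)
            = if i = i0 then (∑ α, ∑ β ∈ Finset.univ.erase α, T α β * D) else 0 := by
          intro i
          have h3 : (∑ j : Fin n_s, (if j = j0 then (1:ℝ) else 0)
              * (∑ α, ∑ β ∈ Finset.univ.erase α, T α β * D))
              = ∑ α, ∑ β ∈ Finset.univ.erase α, T α β * D := by
            rw [Finset.sum_congr rfl fun j _ => boole_collapse _ _, hcol]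
          rw [h3, boole_collapse]
        rw [Finset.sum_congr rfl fun i _ => h2 i, hcol]
    _ = (∑ α, ∑ β ∈ Finset.univ.erase α, T α β) * D := by
        rw [Finset.sum_mul]
        refine Finset.sum_congr rfl fun α _ => ?_
        rw [Finset.sum_mul]
    _ = (∑ l, bOf A r k0 l * ((((N j0 k0 : ℤ) : ℝ) + 1) * ((N j0 l : ℤ) : ℝ))) * D := by
        by_cases hφM : ∀ a b', ((cnt S κ a b' : ℕ) : ℤ) = M a b'
        · rw [hT]
          rw [pairsum hij0 hMab S κ hφM (bOf A r k0)]
        · have hzero : phi M S κ = 0 := by rw [phi, if_neg hφM]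
          rw [hD, hzero, mul_zero, mul_zero, mul_zero]

end Aux7

/-- for the inflow part `G₂` of the second-order adoption generator,
`⟨Φ_M, G₂ Φ_N⟩ = ∑_l c_{ij} b_{kl} N_i^{(k)} N_j^{(l)} ⟨Φ_N, Φ_N⟩` if
`M = N + E_j^{(k)} − E_i^{(k)}` for some statuses `i ≠ j` and subset index `k`, and
`⟨Φ_M, G₂ Φ_N⟩ = 0` otherwise. -/
theorem statement14 (d m n_s n_a : ℕ) (hns : 1 ≤ n_s) (hna : 1 ≤ n_a)
    (Xdom : Set (E d)) (hXcomp : IsCompact Xdom) (hXpos : 0 < volume Xdom)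
    (A : Fin m → Set (E d)) (hAmeas : ∀ k, MeasurableSet (A k))
    (hAdisj : Pairwise (Disjoint on A)) (hApos : ∀ k, 0 < volume (A k))
    (hAcover : (⋃ k, A k) = Xdom)
    (r : ℝ) (hr : 0 < r) (c : Fin n_s → Fin n_s → ℝ)
    (hc : ∀ i j, 0 ≤ c i j) (hcdiag : ∀ i, c i i = 0)
    (M N : Fin n_s → Fin m → ℤ)
    (hM : M ∈ Mset n_s m n_a) (hN : N ∈ Mset n_s m n_a) :
    (∀ (i j : Fin n_s) (k : Fin m), i ≠ j → M = N + Emat j k - Emat i k →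
      ip Xdom (Phi (n_a := n_a) A M) (G2Second c r (Phi A N))
        = (∑ l : Fin m, c i j * bOf A r k l * (N i k : ℝ) * (N j l : ℝ)) *
            ip Xdom (Phi (n_a := n_a) A N) (Phi A N)) ∧
    ((¬∃ (i j : Fin n_s) (k : Fin m), i ≠ j ∧ M = N + Emat j k - Emat i k) →
      ip Xdom (Phi (n_a := n_a) A M) (G2Second c r (Phi A N)) = 0) := by
  have hAfin : ∀ k, volume (A k) ≠ ⊤ := fun k =>
    ((measure_mono (hAcover ▸ Set.subset_iUnion A k)).trans_lt hXcomp.measure_lt_top).ne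
  constructor
  · intro i0 j0 k0 hij0 hMeq
    have hMab : ∀ a b, M a b = N a b + Emat j0 k0 a b - Emat i0 k0 a b := matEq_iff.mp hMeq
    rw [ip_M_G2 A hAmeas hAdisj hAfin hApos hAcover c r M N,
      ip_N_N A hAmeas hAdisj hAfin hAcover N]
    rw [Finset.sum_congr rfl fun S (_ : S ∈ Finset.univ) => Finset.sum_congr rfl
      fun κ (_ : κ ∈ Finset.univ) => bigsum_eq A r hij0 hMab c hcdiag S κ]
    set C : ℝ := (((volume Xdom).toReal * (n_s : ℝ)) ^ n_a)⁻¹ with hC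
    set K : ℝ := ∑ l, bOf A r k0 l * ((((N j0 k0 : ℤ) : ℝ) + 1) * ((N j0 l : ℤ) : ℝ)) with hK
    set K' : ℝ := ∑ l, bOf A r k0 l * ((N j0 l : ℤ) : ℝ) with hK'
    set ZM : ℝ := ∑ S : Fin n_a → Fin n_s, ∑ κ : Fin n_a → Fin m, phi M S κ * Wt A κ with hZM
    set ZN : ℝ := ∑ S : Fin n_a → Fin n_s, ∑ κ : Fin n_a → Fin m, phi N S κ * Wt A κ with hZN
    have h1 : (∑ S : Fin n_a → Fin n_s, ∑ κ : Fin n_a → Fin m,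
        K * (c i0 j0 * Wt A κ * phi M S κ)) = K * c i0 j0 * ZM := by
      rw [hZM, Finset.mul_sum]
      refine Finset.sum_congr rfl fun S _ => ?_
      rw [Finset.mul_sum]
      exact Finset.sum_congr rfl fun κ _ => by ring
    have hKeq : K = (((N j0 k0 : ℤ) : ℝ) + 1) * K' := by
      rw [hK, hK', Finset.mul_sum]
      exact Finset.sum_congr rfl fun l _ => by ring
    have hRHSsum : (∑ l : Fin m, c i0 j0 * bOf A r k0 l
        * ((N i0 k0 : ℤ) : ℝ) * ((N j0 l : ℤ) : ℝ))
        = c i0 j0 * ((N i0 k0 : ℤ) : ℝ) * K' := by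
      rw [hK', Finset.mul_sum]
      exact Finset.sum_congr rfl fun l _ => by ring
    have hflip : (((N j0 k0 : ℤ) : ℝ) + 1) * ZM = ((N i0 k0 : ℤ) : ℝ) * ZN :=
      flip_sum A hij0 hMab
    rw [h1, hRHSsum, hKeq]
    linear_combination C * K' * c i0 j0 * hflip
  · intro hnem
    rw [ip_M_G2 A hAmeas hAdisj hAfin hApos hAcover c r M N]
    rw [Finset.sum_eq_zero fun S (_ : S ∈ Finset.univ) =>
      Finset.sum_eq_zero fun κ _ => Finset.sum_eq_zero fun i _ =>
        Finset.sum_eq_zero fun j _ => Finset.sum_eq_zero fun α _ =>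
          Finset.sum_eq_zero fun β _ => by
            rw [coef_zero hnem c hcdiag, zero_mul], mul_zero]

end ABMFormal
end

section
/- Let M ∈ M_{n_a}, let α ≠ β be agent indices, let S ∈ S^{n_a}, let i, j ∈ S, and let k, l ∈ {1, …, m}. Then δ_i(s_α) δ_j(s_β) ∫_{X^{n_a}} δ_{A_k}(x_α) δ_{A_l}(x_β) d_r(x_α, x_β) Φ_M(X, S) dX = b_{kl} · δ_i(s_α) δ_j(s_β) ∫_{X^{n_a}} δ_{A_k}(x_α) δ_{A_l}(x_β) Φ_M(X, S) dX. -/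
open MeasureTheory Finset Function

namespace ABMFormal

lemma piRestrict {d : ℕ} (n : ℕ) (s : Set (E d)) (hs : MeasurableSet s) :
    (volume : Measure (Fin n → E d)).restrict (Set.univ.pi fun _ => s)
      = Measure.pi (fun _ : Fin n => (volume : Measure (E d)).restrict s) := by
  refine (Measure.pi_eq fun t ht => ?_).symm
  rw [Measure.restrict_apply (MeasurableSet.univ_pi ht), ← Set.pi_inter_distrib,
    volume_pi_pi]
  simp_rw [Measure.restrict_apply (ht _)]

lemma pairInt {d : ℕ} (ν : Measure (E d)) [SigmaFinite ν] {T : Type} [Fintype T]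
    (e₂ : Fin 2 ≃ T) (g : E d → E d → ℝ) :
    ∫ x : T → E d, g (x (e₂ 0)) (x (e₂ 1)) ∂(Measure.pi fun _ => ν)
      = ∫ z : E d × E d, g z.1 z.2 ∂(ν.prod ν) := by
  have h1 := MeasureTheory.measurePreserving_piCongrLeft (fun _ : T => ν) e₂
  have h2 := MeasureTheory.measurePreserving_piFinTwo (fun _ : Fin 2 => ν)
  rw [← h1.integral_comp' (fun x : T → E d => g (x (e₂ 0)) (x (e₂ 1))),
    ← h2.integral_comp' (fun z : E d × E d => g z.1 z.2)]
  refine integral_congr_ae (Filter.Eventually.of_forall fun w => ?_)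
  simp [MeasurableEquiv.piCongrLeft_apply_apply, MeasurableEquiv.piFinTwo_apply]

lemma split {d n : ℕ} (ν : Measure (E d)) [SigmaFinite ν]
    (α β : Fin n) (hαβ : α ≠ β) (g : E d → E d → ℝ) (F : (Fin n → E d) → ℝ)
    (hF : ∀ X Y : Fin n → E d, (∀ γ, ¬(γ = α ∨ γ = β) → X γ = Y γ) → F X = F Y) :
    ∫ X : Fin n → E d, g (X α) (X β) * F X ∂(Measure.pi fun _ => ν)
      = (∫ z : E d × E d, g z.1 z.2 ∂(ν.prod ν)) *
        ∫ y : {γ : Fin n // ¬(γ = α ∨ γ = β)} → E d,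
          F (fun γ => if h : γ = α ∨ γ = β then 0 else y ⟨γ, h⟩)
          ∂(Measure.pi fun _ => ν) := by
  have hmp := MeasureTheory.measurePreserving_piEquivPiSubtypeProd
    (fun _ : Fin n => ν) (fun γ : Fin n => γ = α ∨ γ = β)
  have key := hmp.integral_comp'
    (fun z : ({γ : Fin n // γ = α ∨ γ = β} → E d) × ({γ : Fin n // ¬(γ = α ∨ γ = β)} → E d) =>
      g (z.1 ⟨α, Or.inl rfl⟩) (z.1 ⟨β, Or.inr rfl⟩) *
        F (fun γ => if h : γ = α ∨ γ = β then 0 else z.2 ⟨γ, h⟩))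
  have lhs_eq : ∫ X : Fin n → E d, g (X α) (X β) * F X ∂(Measure.pi fun _ => ν)
      = ∫ z : ({γ : Fin n // γ = α ∨ γ = β} → E d) × ({γ : Fin n // ¬(γ = α ∨ γ = β)} → E d),
          g (z.1 ⟨α, Or.inl rfl⟩) (z.1 ⟨β, Or.inr rfl⟩) *
            F (fun γ => if h : γ = α ∨ γ = β then 0 else z.2 ⟨γ, h⟩)
          ∂((Measure.pi fun _ : {γ : Fin n // γ = α ∨ γ = β} => ν).prod
              (Measure.pi fun _ : {γ : Fin n // ¬(γ = α ∨ γ = β)} => ν)) := by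
    rw [← key]
    refine integral_congr_ae (Filter.Eventually.of_forall fun X => ?_)
    simp only [MeasurableEquiv.piEquivPiSubtypeProd_apply]
    congr 1
    refine hF _ _ fun γ hγ => ?_
    simp [hγ]
  rw [lhs_eq, integral_prod_mul
    (f := fun x : {γ : Fin n // γ = α ∨ γ = β} → E d => g (x ⟨α, Or.inl rfl⟩) (x ⟨β, Or.inr rfl⟩))
    (g := fun y : {γ : Fin n // ¬(γ = α ∨ γ = β)} → E d =>
      F (fun γ => if h : γ = α ∨ γ = β then 0 else y ⟨γ, h⟩))]
  congr 1
  -- the pair integral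
  let e₂ : Fin 2 ≃ {γ : Fin n // γ = α ∨ γ = β} :=
    { toFun := fun i => if i = 0 then ⟨α, Or.inl rfl⟩ else ⟨β, Or.inr rfl⟩
      invFun := fun t => if (t : Fin n) = α then 0 else 1
      left_inv := by
        intro i
        fin_cases i
        · simp
        · simp [hαβ.symm]
      right_inv := by
        rintro ⟨γ, hγ | hγ⟩ <;> subst hγ <;> simp [hαβ.symm] }
  have := pairInt ν e₂ g
  have h0 : e₂ 0 = ⟨α, Or.inl rfl⟩ := rfl
  have h1 : e₂ 1 = ⟨β, Or.inr rfl⟩ := rfl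
  rw [h0, h1] at this
  exact this


theorem statement15_core {d m n_s n_a : ℕ}
    (Xdom : Set (E d)) (hXcomp : IsCompact Xdom)
    (A : Fin m → Set (E d)) (hAmeas : ∀ k, MeasurableSet (A k))
    (hAdisj : Pairwise (Disjoint on A)) (hApos : ∀ k, 0 < volume (A k))
    (hAcover : (⋃ k, A k) = Xdom)
    (r : ℝ) (M : Fin n_s → Fin m → ℤ)
    (α β : Fin n_a) (hαβ : α ≠ β)
    (S : Fin n_a → Fin n_s) (k l : Fin m) :
    (∫ X in posSet Xdom n_a,
          deltaA (A k) (X α) * deltaA (A l) (X β) * dr r (X α) (X β) * Phi A M X S)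
      = ((∫ x in A k, ∫ y in A l, dr r x y) /
          ((volume (A k)).toReal * (volume (A l)).toReal)) *
        ∫ X in posSet Xdom n_a,
          deltaA (A k) (X α) * deltaA (A l) (X β) * Phi A M X S := by
  classical
  have hsub : ∀ k', A k' ⊆ Xdom := fun k' => by
    rw [← hAcover]; exact Set.subset_iUnion A k'
  have hXmeas : MeasurableSet Xdom := hXcomp.isClosed.measurableSet
  set ν : Measure (E d) := volume.restrict Xdom with hν
  haveI : IsFiniteMeasure ν := ⟨by
    rw [hν, Measure.restrict_apply_univ]; exact hXcomp.measure_lt_top⟩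
  obtain ⟨x0, hx0⟩ : (A k).Nonempty := nonempty_of_measure_ne_zero (hApos k).ne'
  obtain ⟨y0, hy0⟩ : (A l).Nonempty := nonempty_of_measure_ne_zero (hApos l).ne'
  set F : (Fin n_a → E d) → ℝ :=
    fun X => Phi A M (Function.update (Function.update X α x0) β y0) S with hFdef
  have hF : ∀ X Y : Fin n_a → E d, (∀ γ, ¬(γ = α ∨ γ = β) → X γ = Y γ) → F X = F Y := by
    intro X Y h
    have hupd : Function.update (Function.update X α x0) β y0
        = Function.update (Function.update Y α x0) β y0 := by
      funext γ
      by_cases hb : γ = β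
      · subst hb; simp
      · by_cases ha : γ = α
        · subst ha; simp [Function.update_of_ne hb]
        · simp [Function.update_of_ne hb, Function.update_of_ne ha, h γ (by tauto)]
    simp only [hFdef, hupd]
  have hmem : ∀ (X : Fin n_a → E d), X α ∈ A k → X β ∈ A l → ∀ (k' : Fin m) (γ : Fin n_a),
      (Function.update (Function.update X α x0) β y0 γ ∈ A k' ↔ X γ ∈ A k') := by
    intro X hk hl k' γ
    by_cases hb : γ = β
    · subst hb
      rw [Function.update_self]
      by_cases hk'l : k' = l
      · subst hk'l; simp [hy0, hl]
      · exact iff_of_false (Set.disjoint_right.1 (hAdisj hk'l) hy0)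
          (Set.disjoint_right.1 (hAdisj hk'l) hl)
    · by_cases ha : γ = α
      · subst ha
        rw [Function.update_of_ne hb, Function.update_self]
        by_cases hk'k : k' = k
        · subst hk'k; simp [hx0, hk]
        · exact iff_of_false (Set.disjoint_right.1 (hAdisj hk'k) hx0)
            (Set.disjoint_right.1 (hAdisj hk'k) hk)
      · rw [Function.update_of_ne hb, Function.update_of_ne ha]
  have hPhi : ∀ X : Fin n_a → E d, X α ∈ A k → X β ∈ A l → Phi A M X S = F X := by
    intro X hk hl
    have hocc : ∀ (i' : Fin n_s) (k' : Fin m),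
        occ A (Function.update (Function.update X α x0) β y0) S i' k' = occ A X S i' k' := by
      intro i' k'
      unfold occ
      congr 1
      ext γ
      simp only [Set.mem_setOf_eq]
      exact and_congr_left' (hmem X hk hl k' γ)
    simp only [hFdef, Phi]
    simp_rw [hocc]
  have hpt : ∀ (c : ℝ) (X : Fin n_a → E d),
      deltaA (A k) (X α) * deltaA (A l) (X β) * c * Phi A M X S
        = deltaA (A k) (X α) * deltaA (A l) (X β) * c * F X := by
    intro c X
    by_cases hk1 : X α ∈ A k
    · by_cases hl1 : X β ∈ A l
      · rw [hPhi X hk1 hl1]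
      · simp [deltaA, Set.indicator_of_notMem hl1]
    · simp [deltaA, Set.indicator_of_notMem hk1]
  have hpt0 : ∀ X : Fin n_a → E d,
      deltaA (A k) (X α) * deltaA (A l) (X β) * Phi A M X S
        = deltaA (A k) (X α) * deltaA (A l) (X β) * F X := by
    intro X
    have := hpt 1 X
    simpa using this
  have hrestrict : (volume : Measure (Fin n_a → E d)).restrict (posSet Xdom n_a)
      = Measure.pi fun _ : Fin n_a => ν := by
    unfold posSet; exact piRestrict n_a Xdom hXmeas
  -- generic indicator reduction
  have hind : ∀ (s : Set (E d)), MeasurableSet s → s ⊆ Xdom → ∀ (h : E d → ℝ),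
      ∫ y, deltaA s y * h y ∂ν = ∫ y in s, h y := by
    intro s hs hss h
    have heq : (fun y => deltaA s y * h y) = s.indicator h := by
      funext y
      by_cases hy : y ∈ s <;> simp [deltaA, Set.indicator_apply, hy]
    rw [heq, integral_indicator hs, hν, Measure.restrict_restrict hs,
      Set.inter_eq_self_of_subset_left hss]
  have hAkvol : ∫ x, deltaA (A k) x ∂ν = (volume (A k)).toReal := by
    have := hind (A k) (hAmeas k) (hsub k) (fun _ => (1 : ℝ))
    simp at this; exact this
  have hAlvol : ∫ x, deltaA (A l) x ∂ν = (volume (A l)).toReal := by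
    have := hind (A l) (hAmeas l) (hsub l) (fun _ => (1 : ℝ))
    simp at this; exact this
  -- integrability of the coupled two-body function
  have hsmeas : MeasurableSet ((A k ×ˢ A l) ∩ {z : E d × E d | dist z.1 z.2 ≤ r}) :=
    ((hAmeas k).prod (hAmeas l)).inter
      (measurableSet_le (continuous_fst.dist continuous_snd).measurable measurable_const)
  have hint1 : Integrable
      (fun z : E d × E d => deltaA (A k) z.1 * deltaA (A l) z.2 * dr r z.1 z.2) (ν.prod ν) := by
    have heq : (fun z : E d × E d => deltaA (A k) z.1 * deltaA (A l) z.2 * dr r z.1 z.2)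
        = Set.indicator ((A k ×ˢ A l) ∩ {z : E d × E d | dist z.1 z.2 ≤ r})
            (fun _ => (1 : ℝ)) := by
      funext z
      by_cases h1 : z.1 ∈ A k <;> by_cases h2 : z.2 ∈ A l <;>
        by_cases h3 : dist z.1 z.2 ≤ r <;>
        simp [deltaA, dr, Set.indicator_apply, h1, h2, h3]
    rw [heq]
    exact (integrable_indicator_iff hsmeas).2
      (integrableOn_const (measure_lt_top _ _).ne)
  -- value of the coupled-32 integral
  have hI1 : ∫ z : E d × E d, deltaA (A k) z.1 * deltaA (A l) z.2 * dr r z.1 z.2 ∂(ν.prod ν)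
      = ∫ x in A k, ∫ y in A l, dr r x y := by
    rw [integral_prod _ hint1]
    have hinner : ∀ x : E d,
        ∫ y, deltaA (A k) x * deltaA (A l) y * dr r x y ∂ν
          = deltaA (A k) x * ∫ y in A l, dr r x y := by
      intro x
      have : (fun y => deltaA (A k) x * deltaA (A l) y * dr r x y)
          = fun y => deltaA (A k) x * (deltaA (A l) y * dr r x y) := by
        funext y; ring
      rw [this, integral_const_mul, hind (A l) (hAmeas l) (hsub l) (fun y => dr r x y)]
    simp_rw [hinner]
    exact hind (A k) (hAmeas k) (hsub k) (fun x => ∫ y in A l, dr r x y)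
  have hI0 : ∫ z : E d × E d, deltaA (A k) z.1 * deltaA (A l) z.2 ∂(ν.prod ν)
      = (volume (A k)).toReal * (volume (A l)).toReal := by
    rw [integral_prod_mul (f := fun x => deltaA (A k) x) (g := fun y => deltaA (A l) y),
      hAkvol, hAlvol]
  have hfink : (volume (A k)).toReal ≠ 0 :=
    (ENNReal.toReal_pos (hApos k).ne' ((measure_mono (hsub k)).trans_lt
      hXcomp.measure_lt_top).ne).ne'
  have hfinl : (volume (A l)).toReal ≠ 0 :=
    (ENNReal.toReal_pos (hApos l).ne' ((measure_mono (hsub l)).trans_lt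
      hXcomp.measure_lt_top).ne).ne'
  -- now assemble
  have h1 : (∫ X in posSet Xdom n_a,
        deltaA (A k) (X α) * deltaA (A l) (X β) * dr r (X α) (X β) * Phi A M X S)
      = ∫ X : Fin n_a → E d,
          (fun x y => deltaA (A k) x * deltaA (A l) y * dr r x y) (X α) (X β) * F X
          ∂(Measure.pi fun _ : Fin n_a => ν) := by
    rw [← hrestrict]
    refine integral_congr_ae (Filter.Eventually.of_forall fun X => ?_)
    exact hpt (dr r (X α) (X β)) X
  have h2 : (∫ X in posSet Xdom n_a,
        deltaA (A k) (X α) * deltaA (A l) (X β) * Phi A M X S)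
      = ∫ X : Fin n_a → E d,
          (fun x y => deltaA (A k) x * deltaA (A l) y) (X α) (X β) * F X
          ∂(Measure.pi fun _ : Fin n_a => ν) := by
    rw [← hrestrict]
    refine integral_congr_ae (Filter.Eventually.of_forall fun X => ?_)
    exact hpt0 X
  rw [h1, h2, split ν α β hαβ (fun x y => deltaA (A k) x * deltaA (A l) y * dr r x y) F hF,
    split ν α β hαβ (fun x y => deltaA (A k) x * deltaA (A l) y) F hF]
  rw [show (∫ z : E d × E d, deltaA (A k) z.1 * deltaA (A l) z.2 * dr r z.1 z.2 ∂(ν.prod ν))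
      = ∫ x in A k, ∫ y in A l, dr r x y from hI1,
    show (∫ z : E d × E d, deltaA (A k) z.1 * deltaA (A l) z.2 ∂(ν.prod ν))
      = (volume (A k)).toReal * (volume (A l)).toReal from hI0]
  rw [div_mul_eq_mul_div, mul_comm]
  field_simp

/-- for `M ∈ M_{n_a}`, distinct agents `α ≠ β`, statuses `i, j` and
subset indices `k, l`:
`δ_i(s_α) δ_j(s_β) ∫_{X^{n_a}} δ_{A_k}(x_α) δ_{A_l}(x_β) d_r(x_α, x_β) Φ_M dX
 = b_{kl} δ_i(s_α) δ_j(s_β) ∫_{X^{n_a}} δ_{A_k}(x_α) δ_{A_l}(x_β) Φ_M dX`. -/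
theorem statement15 (d m n_s n_a : ℕ) (hns : 1 ≤ n_s) (hna : 1 ≤ n_a)
    (Xdom : Set (E d)) (hXcomp : IsCompact Xdom) (hXpos : 0 < volume Xdom)
    (A : Fin m → Set (E d)) (hAmeas : ∀ k, MeasurableSet (A k))
    (hAdisj : Pairwise (Disjoint on A)) (hApos : ∀ k, 0 < volume (A k))
    (hAcover : (⋃ k, A k) = Xdom)
    (r : ℝ) (hr : 0 < r)
    (M : Fin n_s → Fin m → ℤ) (hM : M ∈ Mset n_s m n_a)
    (α β : Fin n_a) (hαβ : α ≠ β)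
    (S : Fin n_a → Fin n_s) (i j : Fin n_s) (k l : Fin m) :
    deltaS i (S α) * deltaS j (S β) *
        ∫ X in posSet Xdom n_a,
          deltaA (A k) (X α) * deltaA (A l) (X β) * dr r (X α) (X β) * Phi A M X S
      = bOf A r k l * (deltaS i (S α) * deltaS j (S β) *
          ∫ X in posSet Xdom n_a,
            deltaA (A k) (X α) * deltaA (A l) (X β) * Phi A M X S) := by
  have hcore := statement15_core Xdom hXcomp A hAmeas hAdisj hApos hAcover r M α β hαβ S k l
  rw [hcore, show ((∫ x in A k, ∫ y in A l, dr r x y) /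
      ((volume (A k)).toReal * (volume (A l)).toReal)) = bOf A r k l from rfl]
  ring

end ABMFormal
end
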